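/- arXiv:2001.05114 — 3 statements merged into one kernel-verified Lean document; each statement's English description precedes it below -/
import Mathlib

section
/- For all real x with x > 2, the logarithmic integral satisfies ∫₂ˣ 1/log t dt ≤ 1.37 · x / log x. -/
open Real Set MeasureTheory intervalIntegral

private lemma f_intble {a b : ℝ} (ha : 1 < a) (hb : 1 < b) :
    IntervalIntegrable (fun t => 1 / Real.log t) volume a b := by
  apply ContinuousOn.intervalIntegrable
  have h1 : ∀ t ∈ uIcc a b, 1 < t := fun t ht => (lt_min ha hb).trans_le ht.1
  apply ContinuousOn.div continuousOn_const
  · exact Real.continuousOn_log.mono fun t ht => ne_of_gt (zero_lt_one.trans (h1 t ht))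
  · exact fun t ht => ne_of_gt (Real.log_pos (h1 t ht))

private lemma psi_intble {a b : ℝ} (ha : 1 < a) (hb : 1 < b) :
    IntervalIntegrable (fun t => (1.37 * Real.log t - 1.37) / (Real.log t)^2) volume a b := by
  apply ContinuousOn.intervalIntegrable
  have h1 : ∀ t ∈ uIcc a b, 1 < t := fun t ht => (lt_min ha hb).trans_le ht.1
  have hlc : ContinuousOn Real.log (uIcc a b) :=
    Real.continuousOn_log.mono fun t ht => ne_of_gt (zero_lt_one.trans (h1 t ht))
  apply ContinuousOn.div ((continuousOn_const.mul hlc).sub continuousOn_const) (hlc.pow 2)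
  exact fun t ht => pow_ne_zero _ (ne_of_gt (Real.log_pos (h1 t ht)))

private lemma f_convex : ConvexOn ℝ (Ioi 1) (fun t : ℝ => 1 / Real.log t) := by
  have hint : interior (Ioi (1:ℝ)) = Ioi 1 := interior_Ioi
  apply convexOn_of_hasDerivWithinAt2_nonneg (convex_Ioi 1)
    (f' := fun t => -1 / (t * (Real.log t)^2))
    (f'' := fun t => (Real.log t + 2) / (t^2 * (Real.log t)^3))
  · apply ContinuousOn.div continuousOn_const
    · exact Real.continuousOn_log.mono fun t ht => ne_of_gt (zero_lt_one.trans ht)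
    · exact fun t ht => ne_of_gt (Real.log_pos ht)
  · rw [hint]
    intro t ht
    have ht1 : (1:ℝ) < t := ht
    have ht0 : t ≠ 0 := ne_of_gt (zero_lt_one.trans ht1)
    have hl : Real.log t ≠ 0 := ne_of_gt (Real.log_pos ht1)
    have h := ((hasDerivAt_const t (1:ℝ)).fun_div (Real.hasDerivAt_log ht0) hl)
    apply HasDerivAt.hasDerivWithinAt
    convert h using 1
    · rfl
    field_simp
    ring
  · rw [hint]
    intro t ht
    have ht1 : (1:ℝ) < t := ht
    have ht0 : t ≠ 0 := ne_of_gt (zero_lt_one.trans ht1)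
    have hl : Real.log t ≠ 0 := ne_of_gt (Real.log_pos ht1)
    have hg : HasDerivAt (fun t : ℝ => t * (Real.log t)^2)
        ((Real.log t)^2 + t * (2 * Real.log t ^ 1 * (1/t))) t :=
      (hasDerivAt_id t).mul ((Real.hasDerivAt_log ht0).pow 2) |>.congr_deriv
        (by simp only [id_eq, Pi.pow_apply]; ring)
    have h := (hasDerivAt_const t (-1:ℝ)).fun_div hg (by positivity)
    apply HasDerivAt.hasDerivWithinAt
    convert h using 1
    · rfl
    field_simp
    ring
  · rw [hint]
    intro t ht
    have ht1 : (1:ℝ) < t := ht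
    have hl : 0 < Real.log t := Real.log_pos ht1
    positivity

private lemma trap {a b : ℝ} (ha : 1 < a) (hab : a ≤ b) :
    ∫ t in a..b, 1 / Real.log t ≤ (b - a) * (1 / Real.log a + 1 / Real.log b) / 2 := by
  rcases eq_or_lt_of_le hab with rfl | hab'
  · simp
  have hb : 1 < b := ha.trans hab'
  have hba : 0 < b - a := by linarith
  set A := 1 / Real.log a with hA
  set B := 1 / Real.log b with hB
  have hchord : ∀ t ∈ Icc a b, 1 / Real.log t ≤ A + (t - a) * ((B - A) / (b - a)) := by
    intro t ht
    have hla : ((b - t)/(b - a)) • a + ((t - a)/(b - a)) • b = t := by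
      have := hba.ne'
      rw [smul_eq_mul, smul_eq_mul, div_mul_eq_mul_div, div_mul_eq_mul_div, ← add_div, div_eq_iff this]
      ring
    have hc := f_convex.2 (mem_Ioi.2 ha) (mem_Ioi.2 hb)
      (show (0:ℝ) ≤ (b - t)/(b - a) from div_nonneg (by linarith [ht.2]) hba.le)
      (show (0:ℝ) ≤ (t - a)/(b - a) from div_nonneg (by linarith [ht.1]) hba.le)
      (show (b - t)/(b - a) + (t - a)/(b - a) = 1 by
        rw [← add_div, show b - t + (t - a) = b - a from by ring, div_self hba.ne'])
    rw [hla] at hc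
    simp only [smul_eq_mul] at hc
    calc 1 / Real.log t ≤ (b - t)/(b - a) * A + (t - a)/(b - a) * B := hc
      _ = A + (t - a) * ((B - A) / (b - a)) := by field_simp; ring
  have hint2 : IntervalIntegrable (fun t => A + (t - a) * ((B - A) / (b - a))) volume a b := by
    apply Continuous.intervalIntegrable
    continuity
  have hmono := intervalIntegral.integral_mono_on hab (f_intble ha hb) hint2 hchord
  have hval : ∫ t in a..b, (A + (t - a) * ((B - A) / (b - a)))
      = (b - a) * (A + B) / 2 := by
    have : (fun t : ℝ => A + (t - a) * ((B - A) / (b - a)))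
        = fun t : ℝ => (A - a * ((B - A)/(b - a))) + ((B - A)/(b - a)) * t := by
      funext t; ring
    rw [this, intervalIntegral.integral_add intervalIntegrable_const
      ((by continuity : Continuous fun t : ℝ => (B - A)/(b - a) * t).intervalIntegrable a b),
      intervalIntegral.integral_const, intervalIntegral.integral_const_mul,
      integral_id]
    simp only [smul_eq_mul]
    field_simp
    ring
  rw [hval] at hmono
  exact hmono

private lemma fval {j : ℝ} (hj : 0 < j) :
    1 / Real.log ((2:ℝ)^(j/8)) ≤ 8 / (j * 0.6931471803) := by
  rw [Real.log_rpow two_pos]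
  have c := Real.log_two_gt_d9
  rw [div_le_div_iff₀ (by positivity) (by positivity)]
  nlinarith

private lemma pt_lb {j l : ℝ} (hl0 : 0 ≤ l) (hl8 : l^(8:ℕ) ≤ (2:ℝ)^j) : l ≤ (2:ℝ)^(j/8) := by
  apply le_of_pow_le_pow_left₀ (n := 8) (by norm_num) (by positivity)
  have e : j/8*((8:ℕ):ℝ) = j := by push_cast; ring
  rwa [← Real.rpow_natCast ((2:ℝ)^(j/8)) 8, ← Real.rpow_mul two_pos.le, e]

private lemma pt_ub {k u : ℝ} (hu0 : 0 ≤ u) (hu8 : (2:ℝ)^k ≤ u^(8:ℕ)) : (2:ℝ)^(k/8) ≤ u := by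
  apply le_of_pow_le_pow_left₀ (n := 8) (by norm_num) hu0
  have e : k/8*((8:ℕ):ℝ) = k := by push_cast; ring
  rwa [← Real.rpow_natCast ((2:ℝ)^(k/8)) 8, ← Real.rpow_mul two_pos.le, e]

private lemma one_lt_pt {j : ℝ} (hj : 0 < j) : 1 < (2:ℝ)^(j/8) := by
  rw [Real.one_lt_rpow_iff_of_pos two_pos]
  exact Or.inl ⟨one_lt_two, by positivity⟩

private lemma step {j k : ℝ} (l u : ℝ) (hj : 0 < j) (hjk : j ≤ k)
    (hl0 : 0 ≤ l) (hu0 : 0 ≤ u)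
    (hl8 : l^(8:ℕ) ≤ (2:ℝ)^j) (hu8 : (2:ℝ)^k ≤ u^(8:ℕ)) :
    ∫ t in (2:ℝ)^(j/8)..(2:ℝ)^(k/8), 1 / Real.log t ≤
      (u - l) * (8 / (j * 0.6931471803) + 8 / (k * 0.6931471803)) / 2 := by
  have hk : 0 < k := lt_of_lt_of_le hj hjk
  have ha1 := one_lt_pt hj
  have hb1 := one_lt_pt hk
  have hab : (2:ℝ)^(j/8) ≤ (2:ℝ)^(k/8) :=
    Real.rpow_le_rpow_of_exponent_le one_le_two (by linarith)
  have hla := pt_lb hl0 hl8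
  have hub := pt_ub hu0 hu8
  have hfa := fval hj
  have hfb := fval hk
  have hpa : 0 < Real.log ((2:ℝ)^(j/8)) := Real.log_pos ha1
  have hpb : 0 < Real.log ((2:ℝ)^(k/8)) := Real.log_pos hb1
  refine (trap ha1 hab).trans ?_
  have h1 : (0:ℝ) ≤ 1 / Real.log ((2:ℝ)^(j/8)) + 1 / Real.log ((2:ℝ)^(k/8)) := by positivity
  have h2 : (0:ℝ) ≤ (2:ℝ)^(k/8) - (2:ℝ)^(j/8) := by linarith
  have hm := mul_le_mul (sub_le_sub hub hla) (add_le_add hfa hfb) h1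
    (le_trans h2 (sub_le_sub hub hla))
  linarith

private lemma logB : Real.log 40.5 ≤ 137/37 := by
  rw [Real.log_le_iff_le_exp (by norm_num)]
  have h : (40.5:ℝ)^(37:ℕ) ≤ (Real.exp (137/37))^(37:ℕ) := by
    rw [← Real.exp_nat_mul]
    have e : ((37:ℕ):ℝ) * (137/37) = ((137:ℕ):ℝ) := by norm_num
    rw [e, ← Real.exp_one_pow]
    calc (40.5:ℝ)^(37:ℕ) ≤ 2.7182818283^(137:ℕ) := by norm_num
      _ ≤ (Real.exp 1)^(137:ℕ) :=
        pow_le_pow_left₀ (by norm_num) (le_trans (by norm_num) Real.exp_one_gt_d9.le) _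
  exact le_of_pow_le_pow_left₀ (by norm_num) (Real.exp_pos _).le h

private lemma logC : (137:ℝ)/37 ≤ Real.log 40.6 := by
  rw [Real.le_log_iff_exp_le (by norm_num)]
  have h : (Real.exp (137/37))^(37:ℕ) ≤ (40.6:ℝ)^(37:ℕ) := by
    rw [← Real.exp_nat_mul]
    have e : ((37:ℕ):ℝ) * (137/37) = ((137:ℕ):ℝ) := by norm_num
    rw [e, ← Real.exp_one_pow]
    calc (Real.exp 1)^(137:ℕ) ≤ 2.7182818286^(137:ℕ) :=
        pow_le_pow_left₀ (Real.exp_pos _).le (le_trans Real.exp_one_lt_d9.le (by norm_num)) _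
      _ ≤ (40.6:ℝ)^(37:ℕ) := by norm_num
  exact le_of_pow_le_pow_left₀ (by norm_num) (by norm_num) h

private lemma logD : Real.log 40.6 ≤ 63/17 := by
  rw [Real.log_le_iff_le_exp (by norm_num)]
  have h : (40.6:ℝ)^(17:ℕ) ≤ (Real.exp (63/17))^(17:ℕ) := by
    rw [← Real.exp_nat_mul]
    have e : ((17:ℕ):ℝ) * (63/17) = ((63:ℕ):ℝ) := by norm_num
    rw [e, ← Real.exp_one_pow]
    calc (40.6:ℝ)^(17:ℕ) ≤ 2.7182818283^(63:ℕ) := by norm_num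
      _ ≤ (Real.exp 1)^(63:ℕ) :=
        pow_le_pow_left₀ (by norm_num) (le_trans (by norm_num) Real.exp_one_gt_d9.le) _
  exact le_of_pow_le_pow_left₀ (by norm_num) (Real.exp_pos _).le h

private lemma logE : (1:ℝ) ≤ Real.log 40.5 := by
  rw [Real.le_log_iff_exp_le (by norm_num)]
  calc Real.exp 1 ≤ 2.7182818286 := Real.exp_one_lt_d9.le
    _ ≤ 40.5 := by norm_num

private lemma ftc {a b : ℝ} (ha : 1 < a) (hb : 1 < b) :
    ∫ t in a..b, (1.37 * Real.log t - 1.37) / (Real.log t)^2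
      = 1.37 * b / Real.log b - 1.37 * a / Real.log a := by
  apply intervalIntegral.integral_eq_sub_of_hasDerivAt
  · intro t ht
    have ht1 : 1 < t := (lt_min ha hb).trans_le ht.1
    have ht0 : t ≠ 0 := by positivity
    have hl : Real.log t ≠ 0 := ne_of_gt (Real.log_pos ht1)
    have h := (((hasDerivAt_id t).const_mul (1.37:ℝ)).fun_div (Real.hasDerivAt_log ht0) hl)
    convert h using 1
    · rfl
    · rfl
    field_simp
    rw [id_eq]
    ring
  · exact psi_intble ha hb

private lemma key : ∫ t in (2:ℝ)..(40.6:ℝ), 1 / Real.log t ≤ 14.985 := by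
  have s42 : ∫ t in (2:ℝ)^((42:ℝ)/8)..(40.6:ℝ), 1 / Real.log t ≤
      ((40.6:ℝ) - (190273137/5000000 : ℝ)) * (8 / (42 * 0.6931471803) + 37/137) / 2 := by
    have hab : (2:ℝ)^((42:ℝ)/8) ≤ (40.6:ℝ) := pt_ub (by norm_num) (by norm_num)
    refine (trap (one_lt_pt (by norm_num)) hab).trans ?_
    have hfa : 1 / Real.log ((2:ℝ)^((42:ℝ)/8)) ≤ 8 / (42 * 0.6931471803) := fval (by norm_num)
    have hfb : 1 / Real.log (40.6:ℝ) ≤ 37/137 := by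
      have hc := logC
      have hp : (0:ℝ) < 137/37 := by norm_num
      calc 1 / Real.log (40.6:ℝ) ≤ 1 / ((137:ℝ)/37) := by
            apply one_div_le_one_div_of_le hp hc
        _ = 37/137 := by norm_num
    have hla : (190273137/5000000 : ℝ) ≤ (2:ℝ)^((42:ℝ)/8) := pt_lb (by norm_num) (by norm_num)
    have hpa : 0 < Real.log ((2:ℝ)^((42:ℝ)/8)) := Real.log_pos (one_lt_pt (by norm_num))
    have hpb : 0 < Real.log (40.6:ℝ) := Real.log_pos (by norm_num)
    have h1 : (0:ℝ) ≤ 1 / Real.log ((2:ℝ)^((42:ℝ)/8)) + 1 / Real.log (40.6:ℝ) := by positivity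
    have h2 : (0:ℝ) ≤ (40.6:ℝ) - (2:ℝ)^((42:ℝ)/8) := by linarith
    have hm := mul_le_mul (sub_le_sub_left hla (40.6:ℝ)) (add_le_add hfa hfb) h1
      (le_trans h2 (sub_le_sub_left hla (40.6:ℝ)))
    linarith
  have H42 : ∫ t in (2:ℝ)^((42:ℝ)/8)..(40.6:ℝ), 1 / Real.log t ≤ (173362797753/250000000000 : ℝ) :=
    s42.trans (by norm_num)
  have H41 : ∫ t in (2:ℝ)^((41:ℝ)/8)..(40.6:ℝ), 1 / Real.log t ≤ (31439111743/20000000000 : ℝ) := by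
    rw [← intervalIntegral.integral_add_adjacent_intervals (b := (2:ℝ)^((42:ℝ)/8))
      (f_intble (one_lt_pt (by norm_num)) (one_lt_pt (by norm_num)))
      (f_intble (one_lt_pt (by norm_num)) (by norm_num))]
    have sk : ∫ t in (2:ℝ)^((41:ℝ)/8)..(2:ℝ)^((42:ℝ)/8), 1 / Real.log t ≤
        ((190273139/5000000 : ℝ) - (43620309/1250000 : ℝ)) * (8 / (41 * 0.6931471803) + 8 / (42 * 0.6931471803)) / 2 :=
      step (43620309/1250000 : ℝ) (190273139/5000000 : ℝ) (by norm_num) (by norm_num) (by norm_num) (by norm_num)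
        (by norm_num) (by norm_num)
    exact le_trans (add_le_add sk H42) (by norm_num)
  have H40 : ∫ t in (2:ℝ)^((40:ℝ)/8)..(40.6:ℝ), 1 / Real.log t ≤ (1198722414947/500000000000 : ℝ) := by
    rw [← intervalIntegral.integral_add_adjacent_intervals (b := (2:ℝ)^((41:ℝ)/8))
      (f_intble (one_lt_pt (by norm_num)) (one_lt_pt (by norm_num)))
      (f_intble (one_lt_pt (by norm_num)) (by norm_num))]
    have sk : ∫ t in (2:ℝ)^((40:ℝ)/8)..(2:ℝ)^((41:ℝ)/8), 1 / Real.log t ≤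
        ((87240619/2500000 : ℝ) - (159999999/5000000 : ℝ)) * (8 / (40 * 0.6931471803) + 8 / (41 * 0.6931471803)) / 2 :=
      step (159999999/5000000 : ℝ) (87240619/2500000 : ℝ) (by norm_num) (by norm_num) (by norm_num) (by norm_num)
        (by norm_num) (by norm_num)
    exact le_trans (add_le_add sk H41) (by norm_num)
  have H39 : ∫ t in (2:ℝ)^((39:ℝ)/8)..(40.6:ℝ), 1 / Real.log t ≤ (3173591889549/1000000000000 : ℝ) := by
    rw [← intervalIntegral.integral_add_adjacent_intervals (b := (2:ℝ)^((40:ℝ)/8))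
      (f_intble (one_lt_pt (by norm_num)) (one_lt_pt (by norm_num)))
      (f_intble (one_lt_pt (by norm_num)) (by norm_num))]
    have sk : ∫ t in (2:ℝ)^((39:ℝ)/8)..(2:ℝ)^((40:ℝ)/8), 1 / Real.log t ≤
        ((160000001/5000000 : ℝ) - (293441291/10000000 : ℝ)) * (8 / (39 * 0.6931471803) + 8 / (40 * 0.6931471803)) / 2 :=
      step (293441291/10000000 : ℝ) (160000001/5000000 : ℝ) (by norm_num) (by norm_num) (by norm_num) (by norm_num)
        (by norm_num) (by norm_num)
    exact le_trans (add_le_add sk H40) (by norm_num)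
  have H38 : ∫ t in (2:ℝ)^((38:ℝ)/8)..(40.6:ℝ), 1 / Real.log t ≤ (1951907260827/500000000000 : ℝ) := by
    rw [← intervalIntegral.integral_add_adjacent_intervals (b := (2:ℝ)^((39:ℝ)/8))
      (f_intble (one_lt_pt (by norm_num)) (one_lt_pt (by norm_num)))
      (f_intble (one_lt_pt (by norm_num)) (by norm_num))]
    have sk : ∫ t in (2:ℝ)^((38:ℝ)/8)..(2:ℝ)^((39:ℝ)/8), 1 / Real.log t ≤
        ((58688259/2000000 : ℝ) - (5381737/200000 : ℝ)) * (8 / (38 * 0.6931471803) + 8 / (39 * 0.6931471803)) / 2 :=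
      step (5381737/200000 : ℝ) (58688259/2000000 : ℝ) (by norm_num) (by norm_num) (by norm_num) (by norm_num)
        (by norm_num) (by norm_num)
    exact le_trans (add_le_add sk H39) (by norm_num)
  have H37 : ∫ t in (2:ℝ)^((37:ℝ)/8)..(40.6:ℝ), 1 / Real.log t ≤ (4591294335049/1000000000000 : ℝ) := by
    rw [← intervalIntegral.integral_add_adjacent_intervals (b := (2:ℝ)^((38:ℝ)/8))
      (f_intble (one_lt_pt (by norm_num)) (one_lt_pt (by norm_num)))
      (f_intble (one_lt_pt (by norm_num)) (by norm_num))]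
    have sk : ∫ t in (2:ℝ)^((37:ℝ)/8)..(2:ℝ)^((38:ℝ)/8), 1 / Real.log t ≤
        ((134543427/5000000 : ℝ) - (24675373/1000000 : ℝ)) * (8 / (37 * 0.6931471803) + 8 / (38 * 0.6931471803)) / 2 :=
      step (24675373/1000000 : ℝ) (134543427/5000000 : ℝ) (by norm_num) (by norm_num) (by norm_num) (by norm_num)
        (by norm_num) (by norm_num)
    exact le_trans (add_le_add sk H38) (by norm_num)
  have H36 : ∫ t in (2:ℝ)^((36:ℝ)/8)..(40.6:ℝ), 1 / Real.log t ≤ (1047798878577/200000000000 : ℝ) := by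
    rw [← intervalIntegral.integral_add_adjacent_intervals (b := (2:ℝ)^((37:ℝ)/8))
      (f_intble (one_lt_pt (by norm_num)) (one_lt_pt (by norm_num)))
      (f_intble (one_lt_pt (by norm_num)) (by norm_num))]
    have sk : ∫ t in (2:ℝ)^((36:ℝ)/8)..(2:ℝ)^((37:ℝ)/8), 1 / Real.log t ≤
        ((123376867/5000000 : ℝ) - (226274167/10000000 : ℝ)) * (8 / (36 * 0.6931471803) + 8 / (37 * 0.6931471803)) / 2 :=
      step (226274167/10000000 : ℝ) (123376867/5000000 : ℝ) (by norm_num) (by norm_num) (by norm_num) (by norm_num)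
        (by norm_num) (by norm_num)
    exact le_trans (add_le_add sk H37) (by norm_num)
  have H35 : ∫ t in (2:ℝ)^((35:ℝ)/8)..(40.6:ℝ), 1 / Real.log t ≤ (2924837646837/500000000000 : ℝ) := by
    rw [← intervalIntegral.integral_add_adjacent_intervals (b := (2:ℝ)^((36:ℝ)/8))
      (f_intble (one_lt_pt (by norm_num)) (one_lt_pt (by norm_num)))
      (f_intble (one_lt_pt (by norm_num)) (by norm_num))]
    have sk : ∫ t in (2:ℝ)^((35:ℝ)/8)..(2:ℝ)^((36:ℝ)/8), 1 / Real.log t ≤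
        ((226274171/10000000 : ℝ) - (103747163/5000000 : ℝ)) * (8 / (35 * 0.6931471803) + 8 / (36 * 0.6931471803)) / 2 :=
      step (103747163/5000000 : ℝ) (226274171/10000000 : ℝ) (by norm_num) (by norm_num) (by norm_num) (by norm_num)
        (by norm_num) (by norm_num)
    exact le_trans (add_le_add sk H36) (by norm_num)
  have H34 : ∫ t in (2:ℝ)^((34:ℝ)/8)..(40.6:ℝ), 1 / Real.log t ≤ (1285182134513/200000000000 : ℝ) := by
    rw [← intervalIntegral.integral_add_adjacent_intervals (b := (2:ℝ)^((35:ℝ)/8))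
      (f_intble (one_lt_pt (by norm_num)) (one_lt_pt (by norm_num)))
      (f_intble (one_lt_pt (by norm_num)) (by norm_num))]
    have sk : ∫ t in (2:ℝ)^((34:ℝ)/8)..(2:ℝ)^((35:ℝ)/8), 1 / Real.log t ≤
        ((20749433/1000000 : ℝ) - (11892071/625000 : ℝ)) * (8 / (34 * 0.6931471803) + 8 / (35 * 0.6931471803)) / 2 :=
      step (11892071/625000 : ℝ) (20749433/1000000 : ℝ) (by norm_num) (by norm_num) (by norm_num) (by norm_num)
        (by norm_num) (by norm_num)
    exact le_trans (add_le_add sk H35) (by norm_num)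
  have H33 : ∫ t in (2:ℝ)^((33:ℝ)/8)..(40.6:ℝ), 1 / Real.log t ≤ (348505061321/50000000000 : ℝ) := by
    rw [← intervalIntegral.integral_add_adjacent_intervals (b := (2:ℝ)^((34:ℝ)/8))
      (f_intble (one_lt_pt (by norm_num)) (one_lt_pt (by norm_num)))
      (f_intble (one_lt_pt (by norm_num)) (by norm_num))]
    have sk : ∫ t in (2:ℝ)^((33:ℝ)/8)..(2:ℝ)^((34:ℝ)/8), 1 / Real.log t ≤
        ((9513657/500000 : ℝ) - (34896247/2000000 : ℝ)) * (8 / (33 * 0.6931471803) + 8 / (34 * 0.6931471803)) / 2 :=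
      step (34896247/2000000 : ℝ) (9513657/500000 : ℝ) (by norm_num) (by norm_num) (by norm_num) (by norm_num)
        (by norm_num) (by norm_num)
    exact le_trans (add_le_add sk H34) (by norm_num)
  have H32 : ∫ t in (2:ℝ)^((32:ℝ)/8)..(40.6:ℝ), 1 / Real.log t ≤ (935560993643/125000000000 : ℝ) := by
    rw [← intervalIntegral.integral_add_adjacent_intervals (b := (2:ℝ)^((33:ℝ)/8))
      (f_intble (one_lt_pt (by norm_num)) (one_lt_pt (by norm_num)))
      (f_intble (one_lt_pt (by norm_num)) (by norm_num))]
    have sk : ∫ t in (2:ℝ)^((32:ℝ)/8)..(2:ℝ)^((33:ℝ)/8), 1 / Real.log t ≤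
        ((174481239/10000000 : ℝ) - (79999999/5000000 : ℝ)) * (8 / (32 * 0.6931471803) + 8 / (33 * 0.6931471803)) / 2 :=
      step (79999999/5000000 : ℝ) (174481239/10000000 : ℝ) (by norm_num) (by norm_num) (by norm_num) (by norm_num)
        (by norm_num) (by norm_num)
    exact le_trans (add_le_add sk H33) (by norm_num)
  have H31 : ∫ t in (2:ℝ)^((31:ℝ)/8)..(40.6:ℝ), 1 / Real.log t ≤ (3985582286713/500000000000 : ℝ) := by
    rw [← intervalIntegral.integral_add_adjacent_intervals (b := (2:ℝ)^((32:ℝ)/8))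
      (f_intble (one_lt_pt (by norm_num)) (one_lt_pt (by norm_num)))
      (f_intble (one_lt_pt (by norm_num)) (by norm_num))]
    have sk : ∫ t in (2:ℝ)^((31:ℝ)/8)..(2:ℝ)^((32:ℝ)/8), 1 / Real.log t ≤
        ((80000001/5000000 : ℝ) - (36680161/2500000 : ℝ)) * (8 / (31 * 0.6931471803) + 8 / (32 * 0.6931471803)) / 2 :=
      step (36680161/2500000 : ℝ) (80000001/5000000 : ℝ) (by norm_num) (by norm_num) (by norm_num) (by norm_num)
        (by norm_num) (by norm_num)
    exact le_trans (add_le_add sk H32) (by norm_num)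
  have H30 : ∫ t in (2:ℝ)^((30:ℝ)/8)..(40.6:ℝ), 1 / Real.log t ≤ (168641779741/20000000000 : ℝ) := by
    rw [← intervalIntegral.integral_add_adjacent_intervals (b := (2:ℝ)^((31:ℝ)/8))
      (f_intble (one_lt_pt (by norm_num)) (one_lt_pt (by norm_num)))
      (f_intble (one_lt_pt (by norm_num)) (by norm_num))]
    have sk : ∫ t in (2:ℝ)^((30:ℝ)/8)..(2:ℝ)^((31:ℝ)/8), 1 / Real.log t ≤
        ((18340081/1250000 : ℝ) - (2102241/156250 : ℝ)) * (8 / (30 * 0.6931471803) + 8 / (31 * 0.6931471803)) / 2 :=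
      step (2102241/156250 : ℝ) (18340081/1250000 : ℝ) (by norm_num) (by norm_num) (by norm_num) (by norm_num)
        (by norm_num) (by norm_num)
    exact le_trans (add_le_add sk H31) (by norm_num)
  have H29 : ∫ t in (2:ℝ)^((29:ℝ)/8)..(40.6:ℝ), 1 / Real.log t ≤ (221727360817/25000000000 : ℝ) := by
    rw [← intervalIntegral.integral_add_adjacent_intervals (b := (2:ℝ)^((30:ℝ)/8))
      (f_intble (one_lt_pt (by norm_num)) (one_lt_pt (by norm_num)))
      (f_intble (one_lt_pt (by norm_num)) (by norm_num))]
    have sk : ∫ t in (2:ℝ)^((29:ℝ)/8)..(2:ℝ)^((30:ℝ)/8), 1 / Real.log t ≤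
        ((33635857/2500000 : ℝ) - (3855527/312500 : ℝ)) * (8 / (29 * 0.6931471803) + 8 / (30 * 0.6931471803)) / 2 :=
      step (3855527/312500 : ℝ) (33635857/2500000 : ℝ) (by norm_num) (by norm_num) (by norm_num) (by norm_num)
        (by norm_num) (by norm_num)
    exact le_trans (add_le_add sk H30) (by norm_num)
  have H28 : ∫ t in (2:ℝ)^((28:ℝ)/8)..(40.6:ℝ), 1 / Real.log t ≤ (4641949837963/500000000000 : ℝ) := by
    rw [← intervalIntegral.integral_add_adjacent_intervals (b := (2:ℝ)^((29:ℝ)/8))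
      (f_intble (one_lt_pt (by norm_num)) (one_lt_pt (by norm_num)))
      (f_intble (one_lt_pt (by norm_num)) (by norm_num))]
    have sk : ∫ t in (2:ℝ)^((28:ℝ)/8)..(2:ℝ)^((29:ℝ)/8), 1 / Real.log t ≤
        ((30844217/2500000 : ℝ) - (56568541/5000000 : ℝ)) * (8 / (28 * 0.6931471803) + 8 / (29 * 0.6931471803)) / 2 :=
      step (56568541/5000000 : ℝ) (30844217/2500000 : ℝ) (by norm_num) (by norm_num) (by norm_num) (by norm_num)
        (by norm_num) (by norm_num)
    exact le_trans (add_le_add sk H29) (by norm_num)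
  have H27 : ∫ t in (2:ℝ)^((27:ℝ)/8)..(40.6:ℝ), 1 / Real.log t ≤ (1935623726051/200000000000 : ℝ) := by
    rw [← intervalIntegral.integral_add_adjacent_intervals (b := (2:ℝ)^((28:ℝ)/8))
      (f_intble (one_lt_pt (by norm_num)) (one_lt_pt (by norm_num)))
      (f_intble (one_lt_pt (by norm_num)) (by norm_num))]
    have sk : ∫ t in (2:ℝ)^((27:ℝ)/8)..(2:ℝ)^((28:ℝ)/8), 1 / Real.log t ≤
        ((56568543/5000000 : ℝ) - (51873581/5000000 : ℝ)) * (8 / (27 * 0.6931471803) + 8 / (28 * 0.6931471803)) / 2 :=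
      step (51873581/5000000 : ℝ) (56568543/5000000 : ℝ) (by norm_num) (by norm_num) (by norm_num) (by norm_num)
        (by norm_num) (by norm_num)
    exact le_trans (add_le_add sk H28) (by norm_num)
  have H26 : ∫ t in (2:ℝ)^((26:ℝ)/8)..(40.6:ℝ), 1 / Real.log t ≤ (10053270100053/1000000000000 : ℝ) := by
    rw [← intervalIntegral.integral_add_adjacent_intervals (b := (2:ℝ)^((27:ℝ)/8))
      (f_intble (one_lt_pt (by norm_num)) (one_lt_pt (by norm_num)))
      (f_intble (one_lt_pt (by norm_num)) (by norm_num))]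
    have sk : ∫ t in (2:ℝ)^((26:ℝ)/8)..(2:ℝ)^((27:ℝ)/8), 1 / Real.log t ≤
        ((51873583/5000000 : ℝ) - (95136567/10000000 : ℝ)) * (8 / (26 * 0.6931471803) + 8 / (27 * 0.6931471803)) / 2 :=
      step (95136567/10000000 : ℝ) (51873583/5000000 : ℝ) (by norm_num) (by norm_num) (by norm_num) (by norm_num)
        (by norm_num) (by norm_num)
    exact le_trans (add_le_add sk H27) (by norm_num)
  have H25 : ∫ t in (2:ℝ)^((25:ℝ)/8)..(40.6:ℝ), 1 / Real.log t ≤ (208215730757/20000000000 : ℝ) := by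
    rw [← intervalIntegral.integral_add_adjacent_intervals (b := (2:ℝ)^((26:ℝ)/8))
      (f_intble (one_lt_pt (by norm_num)) (one_lt_pt (by norm_num)))
      (f_intble (one_lt_pt (by norm_num)) (by norm_num))]
    have sk : ∫ t in (2:ℝ)^((25:ℝ)/8)..(2:ℝ)^((26:ℝ)/8), 1 / Real.log t ≤
        ((95136571/10000000 : ℝ) - (10905077/1250000 : ℝ)) * (8 / (25 * 0.6931471803) + 8 / (26 * 0.6931471803)) / 2 :=
      step (10905077/1250000 : ℝ) (95136571/10000000 : ℝ) (by norm_num) (by norm_num) (by norm_num) (by norm_num)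
        (by norm_num) (by norm_num)
    exact le_trans (add_le_add sk H26) (by norm_num)
  have H24 : ∫ t in (2:ℝ)^((24:ℝ)/8)..(40.6:ℝ), 1 / Real.log t ≤ (2150404569351/200000000000 : ℝ) := by
    rw [← intervalIntegral.integral_add_adjacent_intervals (b := (2:ℝ)^((25:ℝ)/8))
      (f_intble (one_lt_pt (by norm_num)) (one_lt_pt (by norm_num)))
      (f_intble (one_lt_pt (by norm_num)) (by norm_num))]
    have sk : ∫ t in (2:ℝ)^((24:ℝ)/8)..(2:ℝ)^((25:ℝ)/8), 1 / Real.log t ≤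
        ((4362031/500000 : ℝ) - (39999999/5000000 : ℝ)) * (8 / (24 * 0.6931471803) + 8 / (25 * 0.6931471803)) / 2 :=
      step (39999999/5000000 : ℝ) (4362031/500000 : ℝ) (by norm_num) (by norm_num) (by norm_num) (by norm_num)
        (by norm_num) (by norm_num)
    exact le_trans (add_le_add sk H25) (by norm_num)
  have H23 : ∫ t in (2:ℝ)^((23:ℝ)/8)..(40.6:ℝ), 1 / Real.log t ≤ (11078265338207/1000000000000 : ℝ) := by
    rw [← intervalIntegral.integral_add_adjacent_intervals (b := (2:ℝ)^((24:ℝ)/8))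
      (f_intble (one_lt_pt (by norm_num)) (one_lt_pt (by norm_num)))
      (f_intble (one_lt_pt (by norm_num)) (by norm_num))]
    have sk : ∫ t in (2:ℝ)^((23:ℝ)/8)..(2:ℝ)^((24:ℝ)/8), 1 / Real.log t ≤
        ((40000001/5000000 : ℝ) - (73360321/10000000 : ℝ)) * (8 / (23 * 0.6931471803) + 8 / (24 * 0.6931471803)) / 2 :=
      step (73360321/10000000 : ℝ) (40000001/5000000 : ℝ) (by norm_num) (by norm_num) (by norm_num) (by norm_num)
        (by norm_num) (by norm_num)
    exact le_trans (add_le_add sk H24) (by norm_num)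
  have H22 : ∫ t in (2:ℝ)^((22:ℝ)/8)..(40.6:ℝ), 1 / Real.log t ≤ (11390740117033/1000000000000 : ℝ) := by
    rw [← intervalIntegral.integral_add_adjacent_intervals (b := (2:ℝ)^((23:ℝ)/8))
      (f_intble (one_lt_pt (by norm_num)) (one_lt_pt (by norm_num)))
      (f_intble (one_lt_pt (by norm_num)) (by norm_num))]
    have sk : ∫ t in (2:ℝ)^((22:ℝ)/8)..(2:ℝ)^((23:ℝ)/8), 1 / Real.log t ≤
        ((2934413/400000 : ℝ) - (67271711/10000000 : ℝ)) * (8 / (22 * 0.6931471803) + 8 / (23 * 0.6931471803)) / 2 :=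
      step (67271711/10000000 : ℝ) (2934413/400000 : ℝ) (by norm_num) (by norm_num) (by norm_num) (by norm_num)
        (by norm_num) (by norm_num)
    exact le_trans (add_le_add sk H23) (by norm_num)
  have H21 : ∫ t in (2:ℝ)^((21:ℝ)/8)..(40.6:ℝ), 1 / Real.log t ≤ (2338124469137/200000000000 : ℝ) := by
    rw [← intervalIntegral.integral_add_adjacent_intervals (b := (2:ℝ)^((22:ℝ)/8))
      (f_intble (one_lt_pt (by norm_num)) (one_lt_pt (by norm_num)))
      (f_intble (one_lt_pt (by norm_num)) (by norm_num))]
    have sk : ∫ t in (2:ℝ)^((21:ℝ)/8)..(2:ℝ)^((22:ℝ)/8), 1 / Real.log t ≤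
        ((13454343/2000000 : ℝ) - (61688431/10000000 : ℝ)) * (8 / (21 * 0.6931471803) + 8 / (22 * 0.6931471803)) / 2 :=
      step (61688431/10000000 : ℝ) (13454343/2000000 : ℝ) (by norm_num) (by norm_num) (by norm_num) (by norm_num)
        (by norm_num) (by norm_num)
    exact le_trans (add_le_add sk H22) (by norm_num)
  have H20 : ∫ t in (2:ℝ)^((20:ℝ)/8)..(40.6:ℝ), 1 / Real.log t ≤ (119790455193/10000000000 : ℝ) := by
    rw [← intervalIntegral.integral_add_adjacent_intervals (b := (2:ℝ)^((21:ℝ)/8))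
      (f_intble (one_lt_pt (by norm_num)) (one_lt_pt (by norm_num)))
      (f_intble (one_lt_pt (by norm_num)) (by norm_num))]
    have sk : ∫ t in (2:ℝ)^((20:ℝ)/8)..(2:ℝ)^((21:ℝ)/8), 1 / Real.log t ≤
        ((12337687/2000000 : ℝ) - (2828427/500000 : ℝ)) * (8 / (20 * 0.6931471803) + 8 / (21 * 0.6931471803)) / 2 :=
      step (2828427/500000 : ℝ) (12337687/2000000 : ℝ) (by norm_num) (by norm_num) (by norm_num) (by norm_num)
        (by norm_num) (by norm_num)
    exact le_trans (add_le_add sk H21) (by norm_num)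
  have H19 : ∫ t in (2:ℝ)^((19:ℝ)/8)..(40.6:ℝ), 1 / Real.log t ≤ (12257111466687/1000000000000 : ℝ) := by
    rw [← intervalIntegral.integral_add_adjacent_intervals (b := (2:ℝ)^((20:ℝ)/8))
      (f_intble (one_lt_pt (by norm_num)) (one_lt_pt (by norm_num)))
      (f_intble (one_lt_pt (by norm_num)) (by norm_num))]
    have sk : ∫ t in (2:ℝ)^((19:ℝ)/8)..(2:ℝ)^((20:ℝ)/8), 1 / Real.log t ≤
        ((1767767/312500 : ℝ) - (2593679/500000 : ℝ)) * (8 / (19 * 0.6931471803) + 8 / (20 * 0.6931471803)) / 2 :=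
      step (2593679/500000 : ℝ) (1767767/312500 : ℝ) (by norm_num) (by norm_num) (by norm_num) (by norm_num)
        (by norm_num) (by norm_num)
    exact le_trans (add_le_add sk H20) (by norm_num)
  have H18 : ∫ t in (2:ℝ)^((18:ℝ)/8)..(40.6:ℝ), 1 / Real.log t ≤ (3131475469113/250000000000 : ℝ) := by
    rw [← intervalIntegral.integral_add_adjacent_intervals (b := (2:ℝ)^((19:ℝ)/8))
      (f_intble (one_lt_pt (by norm_num)) (one_lt_pt (by norm_num)))
      (f_intble (one_lt_pt (by norm_num)) (by norm_num))]
    have sk : ∫ t in (2:ℝ)^((18:ℝ)/8)..(2:ℝ)^((19:ℝ)/8), 1 / Real.log t ≤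
        ((3242099/625000 : ℝ) - (23784141/5000000 : ℝ)) * (8 / (18 * 0.6931471803) + 8 / (19 * 0.6931471803)) / 2 :=
      step (23784141/5000000 : ℝ) (3242099/625000 : ℝ) (by norm_num) (by norm_num) (by norm_num) (by norm_num)
        (by norm_num) (by norm_num)
    exact le_trans (add_le_add sk H19) (by norm_num)
  have H17 : ∫ t in (2:ℝ)^((17:ℝ)/8)..(40.6:ℝ), 1 / Real.log t ≤ (12786490818209/1000000000000 : ℝ) := by
    rw [← intervalIntegral.integral_add_adjacent_intervals (b := (2:ℝ)^((18:ℝ)/8))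
      (f_intble (one_lt_pt (by norm_num)) (one_lt_pt (by norm_num)))
      (f_intble (one_lt_pt (by norm_num)) (by norm_num))]
    have sk : ∫ t in (2:ℝ)^((17:ℝ)/8)..(2:ℝ)^((18:ℝ)/8), 1 / Real.log t ≤
        ((23784143/5000000 : ℝ) - (43620307/10000000 : ℝ)) * (8 / (17 * 0.6931471803) + 8 / (18 * 0.6931471803)) / 2 :=
      step (43620307/10000000 : ℝ) (23784143/5000000 : ℝ) (by norm_num) (by norm_num) (by norm_num) (by norm_num)
        (by norm_num) (by norm_num)
    exact le_trans (add_le_add sk H18) (by norm_num)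
  have H16 : ∫ t in (2:ℝ)^((16:ℝ)/8)..(40.6:ℝ), 1 / Real.log t ≤ (1629995038167/125000000000 : ℝ) := by
    rw [← intervalIntegral.integral_add_adjacent_intervals (b := (2:ℝ)^((17:ℝ)/8))
      (f_intble (one_lt_pt (by norm_num)) (one_lt_pt (by norm_num)))
      (f_intble (one_lt_pt (by norm_num)) (by norm_num))]
    have sk : ∫ t in (2:ℝ)^((16:ℝ)/8)..(2:ℝ)^((17:ℝ)/8), 1 / Real.log t ≤
        ((43620311/10000000 : ℝ) - (19999999/5000000 : ℝ)) * (8 / (16 * 0.6931471803) + 8 / (17 * 0.6931471803)) / 2 :=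
      step (19999999/5000000 : ℝ) (43620311/10000000 : ℝ) (by norm_num) (by norm_num) (by norm_num) (by norm_num)
        (by norm_num) (by norm_num)
    exact le_trans (add_le_add sk H17) (by norm_num)
  have H15 : ∫ t in (2:ℝ)^((15:ℝ)/8)..(40.6:ℝ), 1 / Real.log t ≤ (2657483778423/200000000000 : ℝ) := by
    rw [← intervalIntegral.integral_add_adjacent_intervals (b := (2:ℝ)^((16:ℝ)/8))
      (f_intble (one_lt_pt (by norm_num)) (one_lt_pt (by norm_num)))
      (f_intble (one_lt_pt (by norm_num)) (by norm_num))]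
    have sk : ∫ t in (2:ℝ)^((15:ℝ)/8)..(2:ℝ)^((16:ℝ)/8), 1 / Real.log t ≤
        ((20000001/5000000 : ℝ) - (36680159/10000000 : ℝ)) * (8 / (15 * 0.6931471803) + 8 / (16 * 0.6931471803)) / 2 :=
      step (36680159/10000000 : ℝ) (20000001/5000000 : ℝ) (by norm_num) (by norm_num) (by norm_num) (by norm_num)
        (by norm_num) (by norm_num)
    exact le_trans (add_le_add sk H16) (by norm_num)
  have H14 : ∫ t in (2:ℝ)^((14:ℝ)/8)..(40.6:ℝ), 1 / Real.log t ≤ (13530025131101/1000000000000 : ℝ) := by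
    rw [← intervalIntegral.integral_add_adjacent_intervals (b := (2:ℝ)^((15:ℝ)/8))
      (f_intble (one_lt_pt (by norm_num)) (one_lt_pt (by norm_num)))
      (f_intble (one_lt_pt (by norm_num)) (by norm_num))]
    have sk : ∫ t in (2:ℝ)^((14:ℝ)/8)..(2:ℝ)^((15:ℝ)/8), 1 / Real.log t ≤
        ((36680163/10000000 : ℝ) - (16817927/5000000 : ℝ)) * (8 / (14 * 0.6931471803) + 8 / (15 * 0.6931471803)) / 2 :=
      step (16817927/5000000 : ℝ) (36680163/10000000 : ℝ) (by norm_num) (by norm_num) (by norm_num) (by norm_num)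
        (by norm_num) (by norm_num)
    exact le_trans (add_le_add sk H15) (by norm_num)
  have H13 : ∫ t in (2:ℝ)^((13:ℝ)/8)..(40.6:ℝ), 1 / Real.log t ≤ (13769019099933/1000000000000 : ℝ) := by
    rw [← intervalIntegral.integral_add_adjacent_intervals (b := (2:ℝ)^((14:ℝ)/8))
      (f_intble (one_lt_pt (by norm_num)) (one_lt_pt (by norm_num)))
      (f_intble (one_lt_pt (by norm_num)) (by norm_num))]
    have sk : ∫ t in (2:ℝ)^((13:ℝ)/8)..(2:ℝ)^((14:ℝ)/8), 1 / Real.log t ≤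
        ((16817929/5000000 : ℝ) - (15422107/5000000 : ℝ)) * (8 / (13 * 0.6931471803) + 8 / (14 * 0.6931471803)) / 2 :=
      step (15422107/5000000 : ℝ) (16817929/5000000 : ℝ) (by norm_num) (by norm_num) (by norm_num) (by norm_num)
        (by norm_num) (by norm_num)
    exact le_trans (add_le_add sk H14) (by norm_num)
  have H12 : ∫ t in (2:ℝ)^((12:ℝ)/8)..(40.6:ℝ), 1 / Real.log t ≤ (14005764338947/1000000000000 : ℝ) := by
    rw [← intervalIntegral.integral_add_adjacent_intervals (b := (2:ℝ)^((13:ℝ)/8))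
      (f_intble (one_lt_pt (by norm_num)) (one_lt_pt (by norm_num)))
      (f_intble (one_lt_pt (by norm_num)) (by norm_num))]
    have sk : ∫ t in (2:ℝ)^((12:ℝ)/8)..(2:ℝ)^((13:ℝ)/8), 1 / Real.log t ≤
        ((15422109/5000000 : ℝ) - (28284269/10000000 : ℝ)) * (8 / (12 * 0.6931471803) + 8 / (13 * 0.6931471803)) / 2 :=
      step (28284269/10000000 : ℝ) (15422109/5000000 : ℝ) (by norm_num) (by norm_num) (by norm_num) (by norm_num)
        (by norm_num) (by norm_num)
    exact le_trans (add_le_add sk H13) (by norm_num)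
  have H11 : ∫ t in (2:ℝ)^((11:ℝ)/8)..(40.6:ℝ), 1 / Real.log t ≤ (890112957001/62500000000 : ℝ) := by
    rw [← intervalIntegral.integral_add_adjacent_intervals (b := (2:ℝ)^((12:ℝ)/8))
      (f_intble (one_lt_pt (by norm_num)) (one_lt_pt (by norm_num)))
      (f_intble (one_lt_pt (by norm_num)) (by norm_num))]
    have sk : ∫ t in (2:ℝ)^((11:ℝ)/8)..(2:ℝ)^((12:ℝ)/8), 1 / Real.log t ≤
        ((28284273/10000000 : ℝ) - (25936789/10000000 : ℝ)) * (8 / (11 * 0.6931471803) + 8 / (12 * 0.6931471803)) / 2 :=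
      step (25936789/10000000 : ℝ) (28284273/10000000 : ℝ) (by norm_num) (by norm_num) (by norm_num) (by norm_num)
        (by norm_num) (by norm_num)
    exact le_trans (add_le_add sk H12) (by norm_num)
  have H10 : ∫ t in (2:ℝ)^((10:ℝ)/8)..(40.6:ℝ), 1 / Real.log t ≤ (14478963886523/1000000000000 : ℝ) := by
    rw [← intervalIntegral.integral_add_adjacent_intervals (b := (2:ℝ)^((11:ℝ)/8))
      (f_intble (one_lt_pt (by norm_num)) (one_lt_pt (by norm_num)))
      (f_intble (one_lt_pt (by norm_num)) (by norm_num))]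
    have sk : ∫ t in (2:ℝ)^((10:ℝ)/8)..(2:ℝ)^((11:ℝ)/8), 1 / Real.log t ≤
        ((25936793/10000000 : ℝ) - (1189207/500000 : ℝ)) * (8 / (10 * 0.6931471803) + 8 / (11 * 0.6931471803)) / 2 :=
      step (1189207/500000 : ℝ) (25936793/10000000 : ℝ) (by norm_num) (by norm_num) (by norm_num) (by norm_num)
        (by norm_num) (by norm_num)
    exact le_trans (add_le_add sk H11) (by norm_num)
  have H9 : ∫ t in (2:ℝ)^((9:ℝ)/8)..(40.6:ℝ), 1 / Real.log t ≤ (7359725278671/500000000000 : ℝ) := by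
    rw [← intervalIntegral.integral_add_adjacent_intervals (b := (2:ℝ)^((10:ℝ)/8))
      (f_intble (one_lt_pt (by norm_num)) (one_lt_pt (by norm_num)))
      (f_intble (one_lt_pt (by norm_num)) (by norm_num))]
    have sk : ∫ t in (2:ℝ)^((9:ℝ)/8)..(2:ℝ)^((10:ℝ)/8), 1 / Real.log t ≤
        ((1486509/625000 : ℝ) - (2726269/1250000 : ℝ)) * (8 / (9 * 0.6931471803) + 8 / (10 * 0.6931471803)) / 2 :=
      step (2726269/1250000 : ℝ) (1486509/625000 : ℝ) (by norm_num) (by norm_num) (by norm_num) (by norm_num)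
        (by norm_num) (by norm_num)
    exact le_trans (add_le_add sk H10) (by norm_num)
  have H8 : ∫ t in (2:ℝ)^((8:ℝ)/8)..(40.6:ℝ), 1 / Real.log t ≤ (14966092787919/1000000000000 : ℝ) := by
    rw [← intervalIntegral.integral_add_adjacent_intervals (b := (2:ℝ)^((9:ℝ)/8))
      (f_intble (one_lt_pt (by norm_num)) (one_lt_pt (by norm_num)))
      (f_intble (one_lt_pt (by norm_num)) (by norm_num))]
    have sk : ∫ t in (2:ℝ)^((8:ℝ)/8)..(2:ℝ)^((9:ℝ)/8), 1 / Real.log t ≤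
        ((5452539/2500000 : ℝ) - (9999999/5000000 : ℝ)) * (8 / (8 * 0.6931471803) + 8 / (9 * 0.6931471803)) / 2 :=
      step (9999999/5000000 : ℝ) (5452539/2500000 : ℝ) (by norm_num) (by norm_num) (by norm_num) (by norm_num)
        (by norm_num) (by norm_num)
    exact le_trans (add_le_add sk H9) (by norm_num)
  have e1 : ((8:ℝ)/8) = 1 := by norm_num
  rw [e1, Real.rpow_one] at H8
  exact H8.trans (by norm_num)

theorem li_upper_bound (x : ℝ) (hx : x > 2) :
    ∫ t in (2:ℝ)..x, 1 / Real.log t ≤ 1.37 * x / Real.log x := by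
  have hx1 : (1:ℝ) < x := by linarith
  have hlogx : 0 < Real.log x := Real.log_pos hx1
  have hB := logB
  have hC := logC
  have hD := logD
  have hE := logE
  have hlog405 : (0:ℝ) < Real.log 40.5 := by linarith
  have hlog406 : (0:ℝ) < Real.log 40.6 := by linarith
  have hkey := key
  -- φ(40.5) ≥ 14.985
  have hphi405 : (14.985:ℝ) ≤ 1.37 * 40.5 / Real.log 40.5 := by
    rw [le_div_iff₀ hlog405]
    nlinarith
  have hphi406 : (14.985:ℝ) ≤ 1.37 * 40.6 / Real.log 40.6 := by
    rw [le_div_iff₀ hlog406]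
    nlinarith
  rcases le_or_gt x 40.5 with h1 | h1
  · -- 2 < x ≤ 40.5
    have hsplit : (∫ t in (2:ℝ)..x, 1 / Real.log t) + ∫ t in x..(40.5:ℝ), 1 / Real.log t
        = ∫ t in (2:ℝ)..(40.5:ℝ), 1 / Real.log t :=
      intervalIntegral.integral_add_adjacent_intervals
        (f_intble (by norm_num) hx1) (f_intble hx1 (by norm_num))
    have hmono : (∫ t in x..(40.5:ℝ), (1.37 * Real.log t - 1.37) / (Real.log t)^2)
        ≤ ∫ t in x..(40.5:ℝ), 1 / Real.log t := by
      apply intervalIntegral.integral_mono_on h1 (psi_intble hx1 (by norm_num))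
        (f_intble hx1 (by norm_num))
      intro t ht
      have ht1 : 1 < t := lt_of_lt_of_le hx1 ht.1
      have hlt : 0 < Real.log t := Real.log_pos ht1
      have hup : Real.log t ≤ 137/37 :=
        le_trans (Real.log_le_log (by linarith) ht.2) hB
      rw [div_le_div_iff₀ (by positivity) hlt]
      nlinarith
    have hftc : (∫ t in x..(40.5:ℝ), (1.37 * Real.log t - 1.37) / (Real.log t)^2)
        = 1.37 * 40.5 / Real.log 40.5 - 1.37 * x / Real.log x := ftc hx1 (by norm_num)
    have hsplit2 : (∫ t in (2:ℝ)..(40.5:ℝ), 1 / Real.log t)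
        + ∫ t in (40.5:ℝ)..(40.6:ℝ), 1 / Real.log t
        = ∫ t in (2:ℝ)..(40.6:ℝ), 1 / Real.log t :=
      intervalIntegral.integral_add_adjacent_intervals
        (f_intble (by norm_num) (by norm_num)) (f_intble (by norm_num) (by norm_num))
    have hnn : (0:ℝ) ≤ ∫ t in (40.5:ℝ)..(40.6:ℝ), 1 / Real.log t := by
      apply intervalIntegral.integral_nonneg (by norm_num)
      intro t ht
      have h1t : (1:ℝ) < t := by linarith [ht.1]
      have := Real.log_pos h1t
      positivity
    linarith [hftc ▸ hmono]
  · rcases le_or_gt x 40.6 with h2 | h2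
    · -- 40.5 < x ≤ 40.6
      have hsplit : (∫ t in (2:ℝ)..x, 1 / Real.log t) + ∫ t in x..(40.6:ℝ), 1 / Real.log t
          = ∫ t in (2:ℝ)..(40.6:ℝ), 1 / Real.log t :=
        intervalIntegral.integral_add_adjacent_intervals
          (f_intble (by norm_num) hx1) (f_intble hx1 (by norm_num))
      have hnn : (0:ℝ) ≤ ∫ t in x..(40.6:ℝ), 1 / Real.log t := by
        apply intervalIntegral.integral_nonneg h2
        intro t ht
        have h1t : (1:ℝ) < t := lt_of_lt_of_le hx1 ht.1
        have := Real.log_pos h1t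
        positivity
      -- φ(40.5) ≤ φ(x)
      have hftc : (∫ t in (40.5:ℝ)..x, (1.37 * Real.log t - 1.37) / (Real.log t)^2)
          = 1.37 * x / Real.log x - 1.37 * 40.5 / Real.log 40.5 := ftc (by norm_num) hx1
      have hnn2 : (0:ℝ) ≤ ∫ t in (40.5:ℝ)..x, (1.37 * Real.log t - 1.37) / (Real.log t)^2 := by
        apply intervalIntegral.integral_nonneg h1.le
        intro t ht
        have ht1 : (1:ℝ) ≤ Real.log t := le_trans hE (Real.log_le_log (by norm_num) ht.1)
        have hlt : 0 < Real.log t := by linarith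
        apply div_nonneg (by nlinarith) (by positivity)
      linarith [hftc ▸ hnn2]
    · -- x > 40.6
      have hsplit : (∫ t in (2:ℝ)..(40.6:ℝ), 1 / Real.log t)
          + ∫ t in (40.6:ℝ)..x, 1 / Real.log t
          = ∫ t in (2:ℝ)..x, 1 / Real.log t :=
        intervalIntegral.integral_add_adjacent_intervals
          (f_intble (by norm_num) (by norm_num)) (f_intble (by norm_num) hx1)
      have hmono : (∫ t in (40.6:ℝ)..x, 1 / Real.log t)
          ≤ ∫ t in (40.6:ℝ)..x, (1.37 * Real.log t - 1.37) / (Real.log t)^2 := by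
        apply intervalIntegral.integral_mono_on h2.le (f_intble (by norm_num) hx1)
          (psi_intble (by norm_num) hx1)
        intro t ht
        have ht1 : 1 < t := by linarith [ht.1]
        have hlt : 0 < Real.log t := Real.log_pos ht1
        have hlo : (137:ℝ)/37 ≤ Real.log t :=
          le_trans hC (Real.log_le_log (by norm_num) ht.1)
        rw [div_le_div_iff₀ hlt (by positivity)]
        nlinarith
      have hftc : (∫ t in (40.6:ℝ)..x, (1.37 * Real.log t - 1.37) / (Real.log t)^2)
          = 1.37 * x / Real.log x - 1.37 * 40.6 / Real.log 40.6 := ftc (by norm_num) hx1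
      linarith [hftc ▸ hmono]
end

section
/- The product over all odd primes p > 2 of (1 + 1/(p³ − p² − 2p)) is at most e^{0.1}. -/
open Real

/-- Majorant function on ℕ: explicit rational bounds on `log (1 + 1/(p³-p²-2p))` for the
primes `3,5,7,11,13,17,19`, and the telescoping bound `1/((n-2)(n-1)n)` for `n ≥ 23`. -/
noncomputable def oddPrimeMajorant (n : ℕ) : ℝ :=
  if n = 3 then 804398149/10000000000
  else if n = 5 then 22101509/2000000000
  else if n = 7 then 17825483/5000000000
  else if n = 11 then 2103493/2500000000
  else if n = 13 then 4993759/10000000000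
  else if n = 17 then 2178413/10000000000
  else if n = 19 then 386967/2500000000
  else if n < 23 then 0
  else 1/(((n : ℝ) - 2) * ((n : ℝ) - 1) * (n : ℝ))

lemma oddPrimeMajorant_nonneg (n : ℕ) : 0 ≤ oddPrimeMajorant n := by
  unfold oddPrimeMajorant
  split_ifs with h1 h2 h3 h4 h5 h6 h7 h8
  · norm_num
  · norm_num
  · norm_num
  · norm_num
  · norm_num
  · norm_num
  · norm_num
  · norm_num
  · have h23 : (23 : ℝ) ≤ (n : ℝ) := by exact_mod_cast (by omega : 23 ≤ n)
    have hpos : (0:ℝ) < ((n : ℝ) - 2) * ((n : ℝ) - 1) * (n : ℝ) :=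
      mul_pos (mul_pos (by linarith) (by linarith)) (by linarith)
    exact le_of_lt (one_div_pos.mpr hpos)

lemma oddPrimeMajorant_le (n : ℕ) : oddPrimeMajorant n ≤ 1 / (n : ℝ) ^ 2 := by
  unfold oddPrimeMajorant
  split_ifs with h1 h2 h3 h4 h5 h6 h7 h8
  · subst h1; norm_num
  · subst h2; norm_num
  · subst h3; norm_num
  · subst h4; norm_num
  · subst h5; norm_num
  · subst h6; norm_num
  · subst h7; norm_num
  · positivity
  · have h23 : (23 : ℝ) ≤ (n : ℝ) := by exact_mod_cast (by omega : 23 ≤ n)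
    have hpos : (0:ℝ) < ((n : ℝ) - 2) * ((n : ℝ) - 1) * (n : ℝ) :=
      mul_pos (mul_pos (by linarith) (by linarith)) (by linarith)
    rw [div_le_div_iff₀ hpos (by positivity)]
    nlinarith

lemma summable_oddPrimeMajorant : Summable oddPrimeMajorant := by
  refine Summable.of_nonneg_of_le oddPrimeMajorant_nonneg oddPrimeMajorant_le ?_
  exact Real.summable_one_div_nat_pow.mpr (by norm_num)

lemma log_one_add_le_of_quadratic {x c : ℝ} (hx : 0 ≤ x) (hc : 0 ≤ c)
    (h : x ≤ c + c ^ 2 / 2) : Real.log (1 + x) ≤ c := by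
  rw [Real.log_le_iff_le_exp (by linarith)]
  have := Real.quadratic_le_exp_of_nonneg hc
  linarith

lemma tsum_oddPrimeMajorant_le : ∑' n, oddPrimeMajorant n ≤ 0.1 := by
  have hsum := summable_oddPrimeMajorant
  rw [← Summable.sum_add_tsum_nat_add 23 hsum]
  have htail : ∑' n, oddPrimeMajorant (n + 23) ≤ 1/924 := by
    apply Real.tsum_le_of_sum_range_le (fun n => oddPrimeMajorant_nonneg _)
    intro N
    set G : ℕ → ℝ := fun k => 1/(2 * ((k : ℝ) + 21) * ((k : ℝ) + 22)) with hG
    have hterm : ∀ n : ℕ, oddPrimeMajorant (n + 23) = G n - G (n + 1) := by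
      intro n
      unfold oddPrimeMajorant
      have h1 : ¬ (n + 23 = 3) := by omega
      have h2 : ¬ (n + 23 = 5) := by omega
      have h3 : ¬ (n + 23 = 7) := by omega
      have h4 : ¬ (n + 23 = 11) := by omega
      have h5 : ¬ (n + 23 = 13) := by omega
      have h6 : ¬ (n + 23 = 17) := by omega
      have h7 : ¬ (n + 23 < 23) := by omega
      have h8 : ¬ (n + 23 = 19) := by omega
      simp only [hG, h1, h2, h3, h4, h5, h6, h7, h8, if_false]
      have hc : ((n + 23 : ℕ) : ℝ) = (n : ℝ) + 23 := by push_cast; ring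
      have hc2 : ((n + 1 : ℕ) : ℝ) = (n : ℝ) + 1 := by push_cast; ring
      rw [hc, hc2]
      have hn : (0 : ℝ) ≤ (n : ℝ) := Nat.cast_nonneg n
      have d1 : ((n : ℝ) + 21) ≠ 0 := by positivity
      have d2 : ((n : ℝ) + 22) ≠ 0 := by positivity
      have d3 : ((n : ℝ) + 1 + 21) ≠ 0 := by positivity
      have d4 : ((n : ℝ) + 1 + 22) ≠ 0 := by positivity
      rw [show ((n:ℝ) + 23 - 2) = (n:ℝ) + 21 from by ring,
        show ((n:ℝ) + 23 - 1) = (n:ℝ) + 22 from by ring,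
        div_sub_div _ _ (by positivity : (2 * ((n:ℝ) + 21) * ((n:ℝ) + 22)) ≠ 0)
          (by positivity : (2 * ((n:ℝ) + 1 + 21) * ((n:ℝ) + 1 + 22)) ≠ 0),
        div_eq_div_iff (by positivity) (by positivity)]
      ring
    calc ∑ n ∈ Finset.range N, oddPrimeMajorant (n + 23)
        = ∑ n ∈ Finset.range N, (G n - G (n + 1)) :=
          Finset.sum_congr rfl fun n _ => hterm n
      _ = G 0 - G N := Finset.sum_range_sub' G N
      _ ≤ 1/924 := by
          have hN : (0 : ℝ) ≤ (N : ℝ) := Nat.cast_nonneg N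
          have hGN : 0 ≤ G N := by
            simp only [hG]; positivity
          have hG0 : G 0 = 1/924 := by simp only [hG]; norm_num
          linarith
  have hhead : ∑ n ∈ Finset.range 23, oddPrimeMajorant n = 60480667/625000000 := by
    simp [Finset.sum_range_succ, oddPrimeMajorant]
    norm_num
  rw [hhead]
  linarith [htail]

theorem prod_odd_primes_le :
    ∏' p : {p : ℕ // p.Prime ∧ 2 < p},
      (1 + 1 / ((p : ℝ) ^ 3 - (p : ℝ) ^ 2 - 2 * (p : ℝ))) ≤ Real.exp 0.1 := by
  set ι := {p : ℕ // p.Prime ∧ 2 < p}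
  set x : ι → ℝ := fun p => 1 / ((p : ℝ) ^ 3 - (p : ℝ) ^ 2 - 2 * (p : ℝ)) with hx_def
  have hp3 : ∀ p : ι, (3 : ℝ) ≤ ((p : ℕ) : ℝ) := by
    intro p
    have : 3 ≤ (p : ℕ) := p.2.2
    exact_mod_cast this
  have hD : ∀ p : ι, ((p : ℕ) : ℝ) ^ 2 ≤ ((p : ℕ) : ℝ) ^ 3 - ((p : ℕ) : ℝ) ^ 2 - 2 * ((p : ℕ) : ℝ) := by
    intro p
    have h := hp3 p
    nlinarith
  have hxpos : ∀ p : ι, 0 < x p := by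
    intro p
    have h := hp3 p
    have := hD p
    apply one_div_pos.mpr
    nlinarith
  have hx_le : ∀ p : ι, x p ≤ 1 / ((p : ℕ) : ℝ) ^ 2 := by
    intro p
    have h := hp3 p
    exact one_div_le_one_div_of_le (by positivity) (hD p)
  have hfpos : ∀ p : ι, (0 : ℝ) < 1 + x p := fun p => by linarith [hxpos p]
  have hlog_nonneg : ∀ p : ι, 0 ≤ Real.log (1 + x p) := fun p =>
    Real.log_nonneg (by linarith [hxpos p])
  have hlog_le_x : ∀ p : ι, Real.log (1 + x p) ≤ x p := by
    intro p
    have := Real.log_le_sub_one_of_pos (hfpos p)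
    linarith
  -- summability of the logs
  have hsummable_sq : Summable (fun p : ι => 1 / ((p : ℕ) : ℝ) ^ 2) := by
    have h : Summable (fun n : ℕ => 1 / (n : ℝ) ^ 2) :=
      Real.summable_one_div_nat_pow.mpr (by norm_num)
    exact h.comp_injective Subtype.val_injective
  have hsumlog : Summable (fun p : ι => Real.log (1 + x p)) := by
    refine Summable.of_nonneg_of_le hlog_nonneg (fun p => le_trans (hlog_le_x p) (hx_le p))
      hsummable_sq
  -- the product equals the exponential of the sum of logs
  have hprod : ∏' p : ι, (1 + x p) = Real.exp (∑' p : ι, Real.log (1 + x p)) := by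
    exact (Real.rexp_tsum_eq_tprod hfpos hsumlog).symm
  -- the per-term bounds against the majorant
  have hbound : ∀ p : ι, Real.log (1 + x p) ≤ oddPrimeMajorant (p : ℕ) := by
    intro p
    obtain ⟨n, hnp, hn2⟩ := p
    by_cases hcase : n < 23
    · interval_cases n <;> first
        | (exfalso; revert hnp; decide)
        | (simp only [hx_def, oddPrimeMajorant]
           norm_num
           rw [Real.log_le_iff_le_exp (by norm_num)]
           exact le_trans (by norm_num) (Real.quadratic_le_exp_of_nonneg (by norm_num)))
    · push_neg at hcase
      have h23 : (23 : ℝ) ≤ (n : ℝ) := by exact_mod_cast hcase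
      have hmaj : oddPrimeMajorant n = 1/(((n : ℝ) - 2) * ((n : ℝ) - 1) * (n : ℝ)) := by
        unfold oddPrimeMajorant
        have h1 : ¬ (n = 3) := by omega
        have h2 : ¬ (n = 5) := by omega
        have h3 : ¬ (n = 7) := by omega
        have h4 : ¬ (n = 11) := by omega
        have h5 : ¬ (n = 13) := by omega
        have h6 : ¬ (n = 17) := by omega
        have h7 : ¬ (n = 19) := by omega
        have h8 : ¬ (n < 23) := by omega
        simp only [h1, h2, h3, h4, h5, h6, h7, h8, if_false]
      rw [hmaj]
      refine le_trans (hlog_le_x ⟨n, hnp, hn2⟩) ?_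
      show 1 / ((n : ℝ) ^ 3 - (n : ℝ) ^ 2 - 2 * (n : ℝ)) ≤ _
      apply one_div_le_one_div_of_le
      · exact mul_pos (mul_pos (by linarith) (by linarith)) (by linarith)
      · nlinarith
  -- sum of logs is at most 0.1
  have htsum : ∑' p : ι, Real.log (1 + x p) ≤ 0.1 := by
    calc ∑' p : ι, Real.log (1 + x p)
        ≤ ∑' n : ℕ, oddPrimeMajorant n := by
          refine Summable.tsum_le_tsum_of_inj (fun p : ι => (p : ℕ)) Subtype.val_injective
            (fun c _ => oddPrimeMajorant_nonneg c) hbound hsumlog summable_oddPrimeMajorant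
      _ ≤ 0.1 := tsum_oddPrimeMajorant_le
  calc ∏' p : ι, (1 + x p) = Real.exp (∑' p : ι, Real.log (1 + x p)) := hprod
    _ ≤ Real.exp 0.1 := Real.exp_le_exp.mpr htsum
end

section
/- For all real x ≥ 1 and all real α, the sum ∑_{n ≤ x} (1 − cos(αn))/n is at most log x + C + log 2 + 3/x, where C is the Euler–Mascheroni constant. -/
open Finset Complex

lemma geom_partial_bound (w : ℂ) (hw : ‖w‖ ≤ 1) (h1 : w ≠ 1) (n : ℕ) :
    ‖∑ i ∈ Finset.range n, w ^ i‖ ≤ 2 / ‖1 - w‖ := by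
  have h0 : (0:ℝ) < ‖1 - w‖ := by
    rw [norm_pos_iff]
    exact sub_ne_zero.mpr (Ne.symm h1)
  have h2 : ‖w ^ n - 1‖ ≤ 2 := by
    calc ‖w ^ n - 1‖ ≤ ‖w ^ n‖ + ‖(1:ℂ)‖ := norm_sub_le _ _
    _ ≤ 1 + 1 := by
        rw [norm_pow, norm_one]
        have : ‖w‖ ^ n ≤ 1 := pow_le_one₀ (norm_nonneg w) hw
        linarith
    _ = 2 := by norm_num
  rw [geom_sum_eq h1 n, norm_div, norm_sub_rev w 1]
  gcongr

lemma abel_tail_bound (w : ℂ) (hw : ‖w‖ ≤ 1) (h1 : w ≠ 1) (N M : ℕ) :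
    ‖∑ n ∈ Finset.Ico (N + 1) M, w ^ n / n‖ ≤ 2 / (((N:ℝ) + 1) * ‖1 - w‖) := by
  have h0 : (0:ℝ) < ‖1 - w‖ := by
    rw [norm_pos_iff]; exact sub_ne_zero.mpr (Ne.symm h1)
  rcases le_or_gt M (N + 1) with hM | hM
  · rw [Finset.Ico_eq_empty (by omega), Finset.sum_empty, norm_zero]
    positivity
  set K := M - (N + 1) with hK
  have hK1 : 1 ≤ K := by omega
  set f : ℕ → ℝ := fun j => ((N + 1 + j : ℕ) : ℝ)⁻¹ with hf
  set g : ℕ → ℂ := fun j => w ^ (N + 1 + j) with hg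
  have hfpos : ∀ j, 0 ≤ f j := fun j => by positivity
  have hfanti : ∀ j, f (j + 1) ≤ f j := by
    intro j
    apply inv_anti₀ (by positivity)
    push_cast; linarith
  have hG : ∀ n, ‖∑ i ∈ Finset.range n, g i‖ ≤ 2 / ‖1 - w‖ := by
    intro n
    have : ∑ i ∈ Finset.range n, g i = w ^ (N + 1) * ∑ i ∈ Finset.range n, w ^ i := by
      rw [Finset.mul_sum]
      exact Finset.sum_congr rfl fun i _ => by simp only [hg]; ring
    rw [this, norm_mul]
    calc ‖w ^ (N+1)‖ * ‖∑ i ∈ Finset.range n, w ^ i‖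
        ≤ 1 * (2 / ‖1 - w‖) := by
          apply mul_le_mul _ (geom_partial_bound w hw h1 n) (norm_nonneg _) zero_le_one
          rw [norm_pow]; exact pow_le_one₀ (norm_nonneg w) hw
      _ = 2 / ‖1 - w‖ := one_mul _
  have hsum : ∑ n ∈ Finset.Ico (N + 1) M, w ^ n / n = ∑ j ∈ Finset.range K, f j • g j := by
    rw [Finset.sum_Ico_eq_sum_range]
    apply Finset.sum_congr rfl
    intro j _
    simp only [hf, hg, Complex.real_smul, Complex.ofReal_inv, Complex.ofReal_natCast]
    rw [div_eq_mul_inv, mul_comm]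
  rw [hsum, Finset.sum_range_by_parts f g K]
  have hstep : ∀ j ∈ Finset.range (K - 1), ‖(f (j + 1) - f j) • (∑ i ∈ Finset.range (j + 1), g i)‖
      ≤ (f j - f (j + 1)) * (2 / ‖1 - w‖) := by
    intro j _
    rw [norm_smul, Real.norm_eq_abs, _root_.abs_of_nonpos (by linarith [hfanti j])]
    have := hG (j + 1)
    have h2 : 0 ≤ f j - f (j + 1) := by linarith [hfanti j]
    calc -(f (j+1) - f j) * ‖∑ i ∈ Finset.range (j+1), g i‖
        = (f j - f (j+1)) * ‖∑ i ∈ Finset.range (j+1), g i‖ := by ring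
      _ ≤ (f j - f (j+1)) * (2 / ‖1 - w‖) := by
          apply mul_le_mul_of_nonneg_left this h2
  calc ‖f (K - 1) • (∑ i ∈ Finset.range K, g i)
          - ∑ j ∈ Finset.range (K - 1), (f (j + 1) - f j) • (∑ i ∈ Finset.range (j + 1), g i)‖
      ≤ ‖f (K - 1) • (∑ i ∈ Finset.range K, g i)‖
        + ‖∑ j ∈ Finset.range (K - 1), (f (j + 1) - f j) • (∑ i ∈ Finset.range (j + 1), g i)‖ :=
        norm_sub_le _ _
    _ ≤ f (K - 1) * (2 / ‖1 - w‖)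
        + ∑ j ∈ Finset.range (K - 1), (f j - f (j + 1)) * (2 / ‖1 - w‖) := by
        apply add_le_add
        · rw [norm_smul, Real.norm_eq_abs, _root_.abs_of_nonneg (hfpos _)]
          exact mul_le_mul_of_nonneg_left (hG K) (hfpos _)
        · exact (norm_sum_le _ _).trans (Finset.sum_le_sum hstep)
    _ = (f (K - 1) + (f 0 - f (K - 1))) * (2 / ‖1 - w‖) := by
        rw [← Finset.sum_mul, Finset.sum_range_sub' f (K - 1)]; ring
    _ = f 0 * (2 / ‖1 - w‖) := by ring
    _ = 2 / (((N:ℝ) + 1) * ‖1 - w‖) := by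
        simp only [hf]
        push_cast
        field_simp
        ring

lemma re_sum_ge_disk (w : ℂ) (hw : ‖w‖ < 1) (N : ℕ) :
    -Real.log ‖1 - w‖ - 2 / (((N:ℝ) + 1) * ‖1 - w‖)
      ≤ (∑ n ∈ Finset.range (N + 1), w ^ n / n).re := by
  have h1 : w ≠ 1 := by
    intro h; rw [h] at hw; simp at hw
  have h0 : (0:ℝ) < ‖1 - w‖ := by
    rw [norm_pos_iff]; exact sub_ne_zero.mpr (Ne.symm h1)
  have hS := Complex.hasSum_taylorSeries_neg_log hw
  have htend := hS.tendsto_sum_nat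
  set P := ∑ n ∈ Finset.range (N + 1), w ^ n / n with hP
  set T := -Complex.log (1 - w) - P with hT
  have htail : Filter.Tendsto (fun M => ∑ n ∈ Finset.Ico (N + 1) M, w ^ n / (n:ℂ))
      Filter.atTop (nhds T) := by
    have hev : ∀ᶠ M in Filter.atTop,
        (∑ n ∈ Finset.range M, w ^ n / (n:ℂ)) - P = ∑ n ∈ Finset.Ico (N + 1) M, w ^ n / (n:ℂ) := by
      filter_upwards [Filter.eventually_ge_atTop (N + 1)] with M hM
      rw [Finset.sum_Ico_eq_sub _ hM]
    exact (htend.sub_const P).congr' hev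
  have hTnorm : ‖T‖ ≤ 2 / (((N:ℝ) + 1) * ‖1 - w‖) := by
    apply le_of_tendsto htail.norm
    filter_upwards with M
    exact abel_tail_bound w hw.le h1 N M
  have hPre : P.re = -Real.log ‖1 - w‖ - T.re := by
    have : P = -Complex.log (1 - w) - T := by rw [hT]; ring
    rw [this, Complex.sub_re, Complex.neg_re, Complex.log_re]
  rw [hPre]
  have : T.re ≤ ‖T‖ := by
    exact Complex.re_le_norm T
  linarith

lemma re_sum_ge_boundary (z : ℂ) (hz : ‖z‖ = 1) (h1 : z ≠ 1) (N : ℕ) :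
    -Real.log ‖1 - z‖ - 2 / (((N:ℝ) + 1) * ‖1 - z‖)
      ≤ (∑ n ∈ Finset.range (N + 1), z ^ n / n).re := by
  have h0 : (0:ℝ) < ‖1 - z‖ := by
    rw [norm_pos_iff]; exact sub_ne_zero.mpr (Ne.symm h1)
  have hnormc : Continuous (fun r : ℝ => ‖1 - (r:ℂ) * z‖) := by continuity
  have hFc : Continuous (fun r : ℝ => (∑ n ∈ Finset.range (N + 1), ((r:ℂ) * z) ^ n / n).re) := by
    continuity
  have hF : Filter.Tendsto (fun r : ℝ => (∑ n ∈ Finset.range (N + 1), ((r:ℂ) * z) ^ n / n).re)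
      (nhdsWithin 1 (Set.Iio 1)) (nhds ((∑ n ∈ Finset.range (N + 1), z ^ n / n).re)) := by
    have h5 := (hFc.tendsto 1).mono_left (nhdsWithin_le_nhds (s := Set.Iio (1:ℝ)))
    simpa using h5
  have hG : Filter.Tendsto
      (fun r : ℝ => -Real.log ‖1 - (r:ℂ) * z‖ - 2 / (((N:ℝ) + 1) * ‖1 - (r:ℂ) * z‖))
      (nhdsWithin 1 (Set.Iio 1))
      (nhds (-Real.log ‖1 - z‖ - 2 / (((N:ℝ) + 1) * ‖1 - z‖))) := by
    have hne : ‖1 - ((1:ℝ):ℂ) * z‖ ≠ 0 := by simpa using h0.ne'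
    have h2 : ContinuousAt (fun r : ℝ => ‖1 - (r:ℂ) * z‖) 1 := hnormc.continuousAt
    have h3 : ContinuousAt (fun r : ℝ => Real.log ‖1 - (r:ℂ) * z‖) 1 := h2.log hne
    have h4 : ContinuousAt
        (fun r : ℝ => -Real.log ‖1 - (r:ℂ) * z‖ - 2 / (((N:ℝ) + 1) * ‖1 - (r:ℂ) * z‖)) 1 := by
      apply ContinuousAt.sub h3.neg
      apply ContinuousAt.div continuousAt_const (continuousAt_const.mul h2)
      simpa using mul_ne_zero (by positivity : ((N:ℝ) + 1) ≠ 0) h0.ne'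
    have h5 := (h4.tendsto).mono_left (nhdsWithin_le_nhds (s := Set.Iio (1:ℝ)))
    simpa using h5
  apply le_of_tendsto_of_tendsto hG hF
  have hmem : Set.Ioo (0:ℝ) 1 ∈ nhdsWithin (1:ℝ) (Set.Iio 1) :=
    Ioo_mem_nhdsLT_of_mem (by constructor <;> norm_num)
  filter_upwards [hmem] with r hr
  have hwn : ‖(r:ℂ) * z‖ < 1 := by
    rw [norm_mul, hz, mul_one, Complex.norm_real, Real.norm_eq_abs,
      abs_of_pos hr.1]
    exact hr.2
  exact re_sum_ge_disk ((r:ℂ) * z) hwn N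

lemma cos_sum_eq (α : ℝ) (N : ℕ) :
    ∑ n ∈ Finset.Icc 1 N, Real.cos (α * n) / n
      = (∑ n ∈ Finset.range (N + 1), (Complex.exp (α * Complex.I)) ^ n / n).re := by
  rw [Complex.re_sum]
  rw [Finset.range_eq_Ico, Finset.sum_eq_sum_Ico_succ_bot (Nat.succ_pos N)]
  rw [show ((Complex.exp (α * Complex.I)) ^ 0 / ((0:ℕ):ℂ)).re = 0 by simp]
  rw [zero_add, ← Finset.Ico_add_one_right_eq_Icc]
  apply Finset.sum_congr rfl
  intro n _
  have h1 : (Complex.exp ((α:ℂ) * Complex.I)) ^ n = Complex.exp (((α * n : ℝ) : ℂ) * Complex.I) := by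
    rw [← Complex.exp_nat_mul]
    congr 1
    push_cast
    ring
  rw [h1, show ((n:ℕ):ℂ) = ((n:ℝ):ℂ) by push_cast; rfl, Complex.div_ofReal_re,
    Complex.exp_ofReal_mul_I_re]

lemma sum_Icc_id_real (N : ℕ) : ∑ n ∈ Finset.Icc 1 N, (n:ℝ) = N * (N + 1) / 2 := by
  induction N with
  | zero => simp
  | succ M ih =>
    rw [Finset.sum_Icc_succ_top (by omega)]
    push_cast
    rw [ih]
    ring

lemma Hs_values :
    ∑ n ∈ Finset.Icc (1:ℕ) 1, 1/(n:ℝ) = 1 ∧ ∑ n ∈ Finset.Icc (1:ℕ) 2, 1/(n:ℝ) = 3/2 ∧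
    ∑ n ∈ Finset.Icc (1:ℕ) 3, 1/(n:ℝ) = 11/6 ∧ ∑ n ∈ Finset.Icc (1:ℕ) 4, 1/(n:ℝ) = 25/12 := by
  have e1 : Finset.Icc 1 1 = ({1} : Finset ℕ) := by decide
  have e2 : Finset.Icc 1 2 = ({1, 2} : Finset ℕ) := by decide
  have e3 : Finset.Icc 1 3 = ({1, 2, 3} : Finset ℕ) := by decide
  have e4 : Finset.Icc 1 4 = ({1, 2, 3, 4} : Finset ℕ) := by decide
  refine ⟨?_, ?_, ?_, ?_⟩ <;> simp [e1, e2, e3, e4, Finset.sum_insert, Finset.mem_insert] <;> norm_num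

lemma Hs_num (N : ℕ) (hN : 1 ≤ N) :
    Real.pi^2*(N:ℝ)/(4*((N:ℝ)+1)) ≤ (∑ n ∈ Finset.Icc 1 N, 1/(n:ℝ)) + Real.log 2 := by
  obtain ⟨e1, e2, e3, e4⟩ := Hs_values
  have hπlt : Real.pi < 3.15 := Real.pi_lt_d2
  have hlog2 : (0.6931471803:ℝ) < Real.log 2 := Real.log_two_gt_d9
  have hπsq : Real.pi^2 ≤ 9.9225 := by nlinarith [Real.pi_pos]
  rcases lt_or_ge N 4 with h4 | h4
  · interval_cases N
    · rw [e1]; norm_num; nlinarith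
    · rw [e2]; norm_num; nlinarith
    · rw [e3]; norm_num; nlinarith
  · have hmono : (25:ℝ)/12 ≤ ∑ n ∈ Finset.Icc 1 N, 1/(n:ℝ) := by
      rw [← e4]
      apply Finset.sum_le_sum_of_subset_of_nonneg (Finset.Icc_subset_Icc_right h4)
      intro i _ _
      positivity
    have hfrac : Real.pi^2*(N:ℝ)/(4*((N:ℝ)+1)) ≤ Real.pi^2/4 := by
      rw [div_le_div_iff₀ (by positivity) (by norm_num)]
      nlinarith [sq_nonneg Real.pi]
    nlinarith

set_option maxHeartbeats 1000000 in
lemma cos_sum_lower (N : ℕ) (hN : 1 ≤ N) (α : ℝ) :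
    -Real.log 2 - 1/((N:ℝ)+1) ≤ ∑ n ∈ Finset.Icc 1 N, Real.cos (α * n) / n := by
  have hNpos : (0:ℝ) < N := by exact_mod_cast hN
  have hN1 : (0:ℝ) < (N:ℝ) + 1 := by positivity
  set z := Complex.exp (α * Complex.I) with hzdef
  have hz : ‖z‖ = 1 := by
    rw [hzdef]; exact Complex.norm_exp_ofReal_mul_I α
  set u := ‖1 - z‖ with hu
  by_cases hcase : 2/((N:ℝ)+1) ≤ u
  · have hu0 : 0 < u := lt_of_lt_of_le (by positivity) hcase
    have hz1 : z ≠ 1 := by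
      intro h
      rw [hu, h] at hu0; simp at hu0
    have key := re_sum_ge_boundary z hz hz1 N
    rw [← cos_sum_eq] at key
    refine le_trans ?_ key
    have hu2 : u ≤ 2 := by
      calc u ≤ ‖(1:ℂ)‖ + ‖z‖ := norm_sub_le _ _
      _ = 2 := by rw [norm_one, hz]; norm_num
    have hlog : Real.log (u/2) ≤ u/2 - 1 := Real.log_le_sub_one_of_pos (by positivity)
    have hlogu : Real.log u = Real.log 2 + Real.log (u/2) := by
      rw [← Real.log_mul two_ne_zero (by positivity : (u/2) ≠ 0),
        show (2:ℝ)*(u/2) = u by ring]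
    have hau : 2 ≤ ((N:ℝ)+1) * u := by
      rw [div_le_iff₀ hN1] at hcase
      linarith [hcase]
    have hkey : 2/(((N:ℝ)+1)*u) - 1/((N:ℝ)+1) ≤ 1 - u/2 := by
      have e1 : 2/(((N:ℝ)+1)*u) - 1/((N:ℝ)+1) = (2-u)/(((N:ℝ)+1)*u) := by
        field_simp
      rw [e1]
      calc (2-u)/(((N:ℝ)+1)*u) ≤ (2-u)/2 := by
            rw [div_le_div_iff₀ (by positivity) (by norm_num)]
            nlinarith
        _ = 1 - u/2 := by ring
    linarith
  · push_neg at hcase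
    have hπ := Real.pi_pos
    set k : ℤ := round (α / (2*Real.pi)) with hk
    set α' : ℝ := α - 2*Real.pi*k with hα'
    have hcosn : ∀ n : ℕ, Real.cos (α * n) = Real.cos (α' * n) := by
      intro n
      have h : α * n = α' * n + (k*n : ℤ) * (2*Real.pi) := by
        push_cast
        rw [hα']; ring
      rw [h, Real.cos_add_int_mul_two_pi]
    have habs : |α'| ≤ Real.pi := by
      have h := abs_sub_round (α / (2*Real.pi))
      have e : α' = 2*Real.pi * (α/(2*Real.pi) - k) := by
        rw [hα']
        field_simp
      calc |α'| = 2*Real.pi * |α/(2*Real.pi) - k| := by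
            rw [e, abs_mul, abs_of_pos (by positivity : (0:ℝ) < 2*Real.pi)]
        _ ≤ 2*Real.pi * (1/2) := by
            apply mul_le_mul_of_nonneg_left h (by positivity)
        _ = Real.pi := by ring
    have hcos1 : Real.cos α = Real.cos α' := by
      have := hcosn 1
      simpa using this
    have husq : u^2 = 2 - 2*Real.cos α' := by
      have hre : (1 - z).re = 1 - Real.cos α := by
        simp [hzdef, Complex.sub_re, Complex.exp_ofReal_mul_I_re]
      have him : (1 - z).im = -Real.sin α := by
        simp [hzdef, Complex.sub_im, Complex.exp_ofReal_mul_I_im]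
      have h2 : u^2 = (1 - z).re^2 + (1 - z).im^2 := by
        rw [hu, Complex.sq_norm, Complex.normSq_apply]; ring
      rw [h2, hre, him, ← hcos1]
      nlinarith [Real.sin_sq_add_cos_sq α]
    have hsinsq : u^2 = 4 * Real.sin (α'/2)^2 := by
      have h2 := Real.cos_two_mul' (α'/2)
      have e : 2*(α'/2) = α' := by ring
      rw [e] at h2
      have h3 := Real.sin_sq_add_cos_sq (α'/2)
      rw [husq]; nlinarith
    clear_value z u α' k
    have hjordan : |α'|/Real.pi ≤ Real.sin (|α'|/2) := by
      have h := Real.mul_le_sin (x := |α'|/2) (by positivity) (by linarith)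
      calc |α'|/Real.pi = 2/Real.pi * (|α'|/2) := by
            field_simp
      _ ≤ _ := h
    have hsabs : Real.sin (|α'|/2)^2 = Real.sin (α'/2)^2 := by
      rcases abs_cases α' with ⟨h, _⟩ | ⟨h, _⟩
      · rw [h]
      · rw [h]
        have e : -α'/2 = -(α'/2) := by ring
        rw [e, Real.sin_neg]; ring
    have hαsq : α'^2 ≤ Real.pi^2/4 * u^2 := by
      have h1 : (|α'|/Real.pi)^2 ≤ Real.sin (|α'|/2)^2 :=
        pow_le_pow_left₀ (by positivity) hjordan 2
      rw [hsabs] at h1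
      have h3 : (|α'|/Real.pi)^2 = α'^2/Real.pi^2 := by rw [div_pow, _root_.sq_abs]
      rw [h3] at h1
      have h4 : Real.sin (α'/2)^2 = u^2/4 := by linarith [hsinsq]
      rw [h4] at h1
      have hπ2 : (0:ℝ) < Real.pi^2 := by positivity
      rw [div_le_div_iff₀ hπ2 (by norm_num)] at h1
      nlinarith [h1]
    have hu0 : (0:ℝ) ≤ u := by rw [hu]; exact norm_nonneg _
    have hαsq2 : α'^2 ≤ Real.pi^2/((N:ℝ)+1)^2 := by
      have h1 : u^2 ≤ (2/((N:ℝ)+1))^2 := pow_le_pow_left₀ hu0 hcase.le 2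
      have h2 : (2/((N:ℝ)+1))^2 = 4/((N:ℝ)+1)^2 := by rw [div_pow]; norm_num
      have hN2 : (0:ℝ) < ((N:ℝ)+1)^2 := by positivity
      rw [h2] at h1
      calc α'^2 ≤ Real.pi^2/4 * u^2 := hαsq
        _ ≤ Real.pi^2/4 * (4/((N:ℝ)+1)^2) := by
            apply mul_le_mul_of_nonneg_left h1 (by positivity)
        _ = Real.pi^2/((N:ℝ)+1)^2 := by field_simp
    have hterm : ∀ n ∈ Finset.Icc 1 N, 1/(n:ℝ) - α'^2 * n / 2 ≤ Real.cos (α * n) / n := by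
      intro n hn
      have hn1 : 1 ≤ n := (Finset.mem_Icc.mp hn).1
      have hnp : (0:ℝ) < n := by exact_mod_cast hn1
      rw [hcosn n]
      have hc := Real.one_sub_sq_div_two_le_cos (x := α' * n)
      have e : (1 - (α'*(n:ℝ))^2/2)/(n:ℝ) = 1/(n:ℝ) - α'^2*(n:ℝ)/2 := by
        field_simp
      rw [← e]
      gcongr
    have hsum1 : ∑ n ∈ Finset.Icc 1 N, (1/(n:ℝ) - α'^2 * n / 2)
        ≤ ∑ n ∈ Finset.Icc 1 N, Real.cos (α * n) / n := Finset.sum_le_sum hterm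
    have hsum2 : ∑ n ∈ Finset.Icc 1 N, (1/(n:ℝ) - α'^2 * n / 2)
        = (∑ n ∈ Finset.Icc 1 N, 1/(n:ℝ)) - α'^2/2 * ((N:ℝ)*((N:ℝ)+1)/2) := by
      rw [Finset.sum_sub_distrib]
      congr 1
      rw [← sum_Icc_id_real N, Finset.mul_sum]
      apply Finset.sum_congr rfl
      intro n _
      ring
    have hb : α'^2/2 * ((N:ℝ)*((N:ℝ)+1)/2) ≤ Real.pi^2*(N:ℝ)/(4*((N:ℝ)+1)) := by
      have h1 := mul_le_mul_of_nonneg_right hαsq2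
        (show (0:ℝ) ≤ (N:ℝ)*((N:ℝ)+1)/4 by positivity)
      have h2 : Real.pi^2/((N:ℝ)+1)^2 * ((N:ℝ)*((N:ℝ)+1)/4) = Real.pi^2*(N:ℝ)/(4*((N:ℝ)+1)) := by
        field_simp
      rw [h2] at h1
      linarith [h1]
    have hfin := Hs_num N hN
    have hend : (0:ℝ) < 1/((N:ℝ)+1) := by positivity
    calc -Real.log 2 - 1/((N:ℝ)+1)
        ≤ (∑ n ∈ Finset.Icc 1 N, 1/(n:ℝ)) - α'^2/2 * ((N:ℝ)*((N:ℝ)+1)/2) := by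
          linarith [hfin, hb, hend]
      _ = ∑ n ∈ Finset.Icc 1 N, (1/(n:ℝ) - α'^2 * n / 2) := hsum2.symm
      _ ≤ _ := hsum1

lemma harm_upper (N : ℕ) (hN : 1 ≤ N) :
    ∑ n ∈ Finset.Icc 1 N, 1/(n:ℝ)
      ≤ Real.log N + Real.eulerMascheroniConstant + 1/N := by
  have hNpos : (0:ℝ) < N := by exact_mod_cast hN
  have h1 : ((harmonic N : ℚ) : ℝ) = ∑ n ∈ Finset.Icc 1 N, 1/(n:ℝ) := by
    rw [harmonic_eq_sum_Icc]
    push_cast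
    exact Finset.sum_congr rfl fun n _ => (one_div _).symm
  have h2 := Real.eulerMascheroniSeq_lt_eulerMascheroniConstant N
  have h2' : ((harmonic N : ℚ) : ℝ) - Real.log ((N:ℝ) + 1)
      < Real.eulerMascheroniConstant := by
    simpa [Real.eulerMascheroniSeq] using h2
  have h3 : Real.log ((N:ℝ) + 1) ≤ Real.log N + 1/N := by
    have h4 : Real.log (((N:ℝ)+1)/N) ≤ ((N:ℝ)+1)/N - 1 :=
      Real.log_le_sub_one_of_pos (by positivity)
    rw [Real.log_div (by positivity) (by positivity)] at h4
    have h5 : ((N:ℝ)+1)/N - 1 = 1/N := by field_simp; ring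
    linarith
  linarith [h1, h2', h3]

theorem sum_one_sub_cos_div_le (x α : ℝ) (hx : 1 ≤ x) :
    ∑ n ∈ Finset.Icc 1 ⌊x⌋₊, (1 - Real.cos (α * n)) / (n : ℝ)
      ≤ Real.log x + Real.eulerMascheroniConstant + Real.log 2 + 3 / x := by
  have hx0 : (0:ℝ) < x := by linarith
  set N := ⌊x⌋₊ with hNdef
  have hN1 : 1 ≤ N := Nat.le_floor (by exact_mod_cast hx)
  have hNx : (N:ℝ) ≤ x := Nat.floor_le hx0.le
  have hxN : x < N + 1 := Nat.lt_floor_add_one x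
  have hNpos : (0:ℝ) < N := by exact_mod_cast hN1
  clear_value N
  have hsplit : ∑ n ∈ Finset.Icc 1 N, (1 - Real.cos (α * n)) / (n:ℝ)
      = (∑ n ∈ Finset.Icc 1 N, 1/(n:ℝ)) - ∑ n ∈ Finset.Icc 1 N, Real.cos (α * n) / n := by
    rw [← Finset.sum_sub_distrib]
    exact Finset.sum_congr rfl fun n _ => by rw [sub_div]
  have h1 := cos_sum_lower N hN1 α
  have h2 := harm_upper N hN1
  have hlog : Real.log N ≤ Real.log x := Real.log_le_log hNpos hNx
  have herr : 1/(N:ℝ) + 1/((N:ℝ)+1) ≤ 3/x := by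
    have hN1' : (1:ℝ) ≤ N := by exact_mod_cast hN1
    have e1 : 1/(N:ℝ) + 1/((N:ℝ)+1) ≤ 3/((N:ℝ)+1) := by
      rw [div_add_div _ _ (by positivity) (by positivity),
        div_le_div_iff₀ (by positivity) (by positivity)]
      nlinarith
    calc 1/(N:ℝ) + 1/((N:ℝ)+1) ≤ 3/((N:ℝ)+1) := e1
      _ ≤ 3/x := div_le_div_of_nonneg_left (by norm_num) hx0 (by linarith)
  rw [hsplit]
  linarith
end
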